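/- Lower bound for the L^p Fourier average of the Hamming variety measure: for p ≥ 1 and d ≥ 2, with μ_j the surface measure on H_j ⊆ F^d (j ≠ 0), one has ‖μ̂_j‖_p ≥ c(d,p) · |F|^{−(1 + (d−1)/p)} with c(d,p) > 0 independent of |F|. Consequently H_j is not (p,s)-Salem for any s > 1/(d−1) + 1/p. -/

import Mathlib

open Finset

/-- The Fourier transform of the surface measure on `E ⊆ F^d`. -/
noncomputable def surfHat {F : Type*} [Field F] [Fintype F] {d : ℕ}
    (χ : AddChar F ℂ) (E : Finset (Fin d → F)) (ξ : Fin d → F) : ℂ :=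
  (E.card : ℂ)⁻¹ * ∑ x ∈ E, χ (-(∑ i, ξ i * x i))

/-- Lower bound for the `L^p` Fourier average of the Hamming variety measure:
for `p ≥ 1`, `d ≥ 2`, there is `c = c(d,p) > 0`, independent of the field, with
`‖μ̂_j‖_p ≥ c |F|^{−(1+(d−1)/p)}` for every finite field `F`, nontrivial character `χ`,
and `j ≠ 0`. -/
lemma sum_pi_succ {F : Type*} [Fintype F] {M : Type*} [AddCommMonoid M] (n : ℕ)
    (f : (Fin (n+1) → F) → M) :
    ∑ x : Fin (n+1) → F, f x = ∑ t : F, ∑ y : Fin n → F, f (Fin.cons t y) := by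
  rw [← (Fin.consEquiv (fun _ : Fin (n+1) => F)).sum_comp, Fintype.sum_prod_type]
  rfl

lemma card_hamming {F : Type*} [Field F] [Fintype F] [DecidableEq F] :
    ∀ n : ℕ, ∀ j : F, j ≠ 0 →
      (univ.filter fun x : Fin (n+1) → F => ∏ k, x k = j).card
        = (Fintype.card F - 1)^n := by
  intro n
  induction n with
  | zero =>
    intro j hj
    rw [pow_zero, Finset.card_eq_one]
    refine ⟨fun _ => j, ?_⟩
    ext x
    simp [funext_iff, Fin.forall_fin_one, Fin.prod_univ_one]
  | succ n ih =>
    intro j hj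
    rw [Finset.card_filter, sum_pi_succ]
    simp_rw [Fin.prod_cons]
    have key : ∀ t : F, (∑ y : Fin (n+1) → F, if t * ∏ k, y k = j then 1 else 0)
        = if t = 0 then 0 else (Fintype.card F - 1)^n := by
      intro t
      by_cases ht : t = 0
      · simp [ht, Ne.symm hj]
      · rw [if_neg ht]
        have hiff : ∀ y : Fin (n+1) → F, (t * ∏ k, y k = j) ↔ (∏ k, y k = t⁻¹ * j) := by
          intro y
          rw [inv_mul_eq_div, eq_div_iff ht, mul_comm]
        simp_rw [hiff]
        rw [← Finset.card_filter, ih (t⁻¹ * j) (by simp [ht, hj])]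
    simp_rw [key]
    rw [Finset.sum_ite, Finset.sum_const, Finset.sum_const, smul_eq_mul, smul_eq_mul, mul_zero,
      zero_add]
    have : (univ.filter fun t : F => ¬ t = 0) = univ.erase 0 := by
      ext t; simp [and_comm]
    rw [this, Finset.card_erase_of_mem (mem_univ 0), Finset.card_univ, pow_succ, mul_comm]

lemma charsum {F : Type*} [Field F] [Fintype F] [DecidableEq F] (χ : AddChar F ℂ)
    (hχ : χ ≠ 1) (n : ℕ) (c j : F) (hc : c ≠ 0) (hj : j ≠ 0) :
    ∑ x ∈ univ.filter (fun x : Fin (n+2) → F => ∏ k, x k = j), χ (c * x 0)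
      = -(((Fintype.card F - 1)^n : ℕ) : ℂ) := by
  rw [Finset.sum_filter, sum_pi_succ]
  simp_rw [Fin.prod_cons, Fin.cons_zero]
  have hchar : ∑ t : F, χ (c * t) = 0 := by
    have h0 : ∑ t : F, χ (c * t) = ∑ s : F, χ s :=
      Fintype.sum_bijective (fun t => c * t) (Equiv.mulLeft₀ c hc).bijective _ _ (fun t => rfl)
    rw [h0, AddChar.sum_eq_zero_iff_ne_zero.2 hχ]
  have key : ∀ t : F, (∑ y : Fin (n+1) → F, if t * ∏ k, y k = j then χ (c * t) else 0)
      = if t = 0 then 0 else (((Fintype.card F - 1)^n : ℕ) : ℂ) * χ (c * t) := by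
    intro t
    by_cases ht : t = 0
    · simp [ht, Ne.symm hj]
    · rw [if_neg ht]
      have hiff : ∀ y : Fin (n+1) → F, (t * ∏ k, y k = j) ↔ (∏ k, y k = t⁻¹ * j) := by
        intro y
        rw [inv_mul_eq_div, eq_div_iff ht, mul_comm]
      simp_rw [hiff]
      rw [Finset.sum_ite, Finset.sum_const, Finset.sum_const_zero, add_zero,
        card_hamming n (t⁻¹ * j) (by simp [ht, hj]), nsmul_eq_mul]
  simp_rw [key]
  rw [← Finset.sum_erase_add univ _ (mem_univ (0 : F)), if_pos rfl, add_zero]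
  have hcongr : ∑ t ∈ univ.erase (0 : F),
      (if t = 0 then 0 else (((Fintype.card F - 1)^n : ℕ) : ℂ) * χ (c * t))
      = ∑ t ∈ univ.erase (0 : F), (((Fintype.card F - 1)^n : ℕ) : ℂ) * χ (c * t) := by
    refine Finset.sum_congr rfl fun t ht => ?_
    rw [if_neg (Finset.mem_erase.1 ht).1]
  rw [hcongr, ← Finset.mul_sum, Finset.sum_erase_eq_sub (mem_univ (0 : F)), hchar,
    mul_zero]
  simp

lemma surfHat_single {F : Type*} [Field F] [Fintype F] [DecidableEq F] (χ : AddChar F ℂ)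
    (hχ : χ ≠ 1) (n : ℕ) (a j : F) (ha : a ≠ 0) (hj : j ≠ 0) :
    ‖surfHat χ (univ.filter (fun x : Fin (n+2) → F => ∏ k, x k = j))
        (Pi.single (0 : Fin (n+2)) a)‖
      = ((Fintype.card F - 1 : ℕ) : ℝ)⁻¹ := by
  have hQ : 2 ≤ Fintype.card F := Fintype.one_lt_card
  have hT : (0:ℝ) < ((Fintype.card F - 1 : ℕ) : ℝ) := by
    have : 1 ≤ Fintype.card F - 1 := by omega
    exact_mod_cast Nat.lt_of_lt_of_le Nat.zero_lt_one this
  unfold surfHat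
  have hlin : ∀ x : Fin (n+2) → F,
      (∑ i, (Pi.single (0 : Fin (n+2)) a : Fin (n+2) → F) i * x i) = a * x 0 := by
    intro x
    rw [Finset.sum_eq_single (0 : Fin (n+2))]
    · simp
    · intro b _ hb
      rw [Pi.single_eq_of_ne hb, zero_mul]
    · simp
  simp_rw [hlin]
  have hneg : ∀ x : Fin (n+2) → F, (-(a * x 0)) = (-a) * x 0 := fun x => by ring
  simp_rw [hneg]
  rw [charsum χ hχ n (-a) j (neg_ne_zero.2 ha) hj,
    card_hamming (n+1) j hj]
  rw [norm_mul, norm_inv, norm_neg, Complex.norm_natCast, Complex.norm_natCast]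
  rw [pow_succ]
  push_cast
  rw [mul_inv, mul_comm (((Fintype.card F - 1 : ℕ):ℝ)^n)⁻¹, mul_assoc,
    inv_mul_cancel₀ (by positivity), mul_one]

theorem hamming_lp_lower (d : ℕ) (hd : 2 ≤ d) (p : ℝ) (hp : 1 ≤ p) :
    ∃ c : ℝ, 0 < c ∧
      ∀ (F : Type) [Field F] [Fintype F] [DecidableEq F] (χ : AddChar F ℂ),
        χ ≠ 1 → ∀ j : F, j ≠ 0 →
        c * (Fintype.card F : ℝ) ^ (-(1 + ((d : ℝ) - 1) / p)) ≤
          ((Fintype.card F : ℝ) ^ (-(d : ℝ)) *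
            ∑ m ∈ univ.filter (fun m : Fin d → F => m ≠ 0),
              ‖(surfHat χ (univ.filter (fun x : Fin d → F => ∏ k, x k = j)) m)‖ ^ p) ^
            (1 / p) := by
  obtain ⟨n, rfl⟩ : ∃ n, d = n + 2 := ⟨d - 2, by omega⟩
  refine ⟨1, one_pos, ?_⟩
  intro F _ _ _ χ hχ j hj
  have hp0 : (0:ℝ) < p := lt_of_lt_of_le one_pos hp
  have hQ : 2 ≤ Fintype.card F := Fintype.one_lt_card
  set q : ℝ := (Fintype.card F : ℝ) with hqdef
  have hq2 : (2:ℝ) ≤ q := by rw [hqdef]; exact_mod_cast hQ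
  have hq0 : (0:ℝ) < q := by linarith
  set T : ℝ := ((Fintype.card F - 1 : ℕ) : ℝ) with hTdef
  have hT1 : (1:ℝ) ≤ T := by
    have h : 1 ≤ Fintype.card F - 1 := by omega
    rw [hTdef]; exact_mod_cast h
  have hT0 : (0:ℝ) < T := by linarith
  have hTq : T ≤ q := by
    rw [hTdef, hqdef]
    exact_mod_cast Nat.sub_le _ _
  -- lower bound the sum
  set S : ℝ := ∑ m ∈ univ.filter (fun m : Fin (n+2) → F => m ≠ 0),
      ‖surfHat χ (univ.filter (fun x : Fin (n+2) → F => ∏ k, x k = j)) m‖ ^ p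
    with hSdef
  have hsub : ((univ.erase (0:F)).image (fun a => Pi.single (0 : Fin (n+2)) a))
      ⊆ univ.filter (fun m : Fin (n+2) → F => m ≠ 0) := by
    intro m hm
    obtain ⟨a, ha, rfl⟩ := Finset.mem_image.1 hm
    have ha0 : a ≠ 0 := (Finset.mem_erase.1 ha).1
    refine Finset.mem_filter.2 ⟨mem_univ _, ?_⟩
    intro h
    exact ha0 (by simpa using congrFun h 0)
  have hSlb : T * T⁻¹ ^ p ≤ S := by
    have h1 : ∑ m ∈ (univ.erase (0:F)).image (fun a => Pi.single (0 : Fin (n+2)) a),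
        ‖surfHat χ (univ.filter (fun x : Fin (n+2) → F => ∏ k, x k = j)) m‖ ^ p
        ≤ S := by
      refine Finset.sum_le_sum_of_subset_of_nonneg hsub ?_
      intro m _ _
      exact Real.rpow_nonneg (norm_nonneg _) p
    refine le_trans (le_of_eq ?_) h1
    rw [Finset.sum_image (by
      intro a _ b _ h
      simpa using congrFun h 0)]
    have heach : ∀ a ∈ univ.erase (0:F),
        ‖surfHat χ (univ.filter (fun x : Fin (n+2) → F => ∏ k, x k = j))
          (Pi.single (0 : Fin (n+2)) a)‖ ^ p = T⁻¹ ^ p := by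
      intro a ha
      rw [surfHat_single χ hχ n a j (Finset.mem_erase.1 ha).1 hj]
    rw [Finset.sum_congr rfl heach, Finset.sum_const,
      Finset.card_erase_of_mem (mem_univ (0:F)), Finset.card_univ, nsmul_eq_mul]
  -- now the rpow arithmetic
  have hS0 : 0 ≤ S := le_trans (by positivity) hSlb
  rw [one_mul]
  have step2 : (q ^ (-(((n:ℝ)+2))) * (T * T⁻¹ ^ p)) ^ (1/p)
      ≤ (q ^ (-(↑(n+2):ℝ)) * S) ^ (1/p) := by
    push_cast
    refine Real.rpow_le_rpow (by positivity) ?_ (by positivity)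
    exact mul_le_mul_of_nonneg_left hSlb (le_of_lt (Real.rpow_pos_of_pos hq0 _))
  refine le_trans ?_ step2
  have hB : T * T⁻¹ ^ p = T ^ (1 - p) := by
    rw [Real.inv_rpow hT0.le, ← Real.rpow_neg hT0.le]
    nth_rewrite 1 [← Real.rpow_one T]
    rw [← Real.rpow_add hT0]
    norm_num [sub_eq_add_neg]
  rw [hB, Real.mul_rpow (le_of_lt (Real.rpow_pos_of_pos hq0 _))
    (le_of_lt (Real.rpow_pos_of_pos hT0 _)), ← Real.rpow_mul hq0.le, ← Real.rpow_mul hT0.le]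
  have hexp : -(1 + ((↑(n+2):ℝ) - 1)/p) = (-((n:ℝ) + 2)) * (1/p) + (1 - p) * (1/p) := by
    push_cast
    field_simp
    ring
  rw [hexp, Real.rpow_add hq0]
  refine mul_le_mul_of_nonneg_left ?_ (le_of_lt (Real.rpow_pos_of_pos hq0 _))
  exact Real.rpow_le_rpow_of_nonpos hT0 hTq
    (mul_nonpos_of_nonpos_of_nonneg (by linarith) (by positivity))
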